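/- If f, g : [0,1] → ℝ are such that there exists c ∈ [0,1] with f ≥ g on [0,c] and f ≤ g on [c,1], and ∫₀¹ f = ∫₀¹ g, then ∫₀¹ x·f(x) dx ≤ ∫₀¹ x·g(x) dx. -/
import Mathlib


open MeasureTheory intervalIntegral

theorem crossing_comparison (f g : ℝ → ℝ)
    (hf : IntegrableOn f (Set.Icc (0:ℝ) 1))
    (hg : IntegrableOn g (Set.Icc (0:ℝ) 1))
    (c : ℝ) (hc0 : 0 ≤ c) (hc1 : c ≤ 1)
    (h1 : ∀ x ∈ Set.Icc 0 c, g x ≤ f x)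
    (h2 : ∀ x ∈ Set.Icc c 1, f x ≤ g x)
    (heq : ∫ x in (0:ℝ)..1, f x = ∫ x in (0:ℝ)..1, g x) :
    ∫ x in (0:ℝ)..1, x * f x ≤ ∫ x in (0:ℝ)..1, x * g x := by
  have h01 : (0:ℝ) ≤ 1 := by norm_num
  have hfi : IntervalIntegrable f volume 0 1 :=
    (intervalIntegrable_iff_integrableOn_Icc_of_le h01).mpr hf
  have hgi : IntervalIntegrable g volume 0 1 :=
    (intervalIntegrable_iff_integrableOn_Icc_of_le h01).mpr hg
  have hfg : IntervalIntegrable (fun x => f x - g x) volume 0 1 := hfi.sub hgi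
  have hcont : ContinuousOn (fun x : ℝ => x - c) (Set.uIcc 0 1) :=
    (continuous_id.sub continuous_const).continuousOn
  have hm : IntervalIntegrable (fun x => (x - c) * (f x - g x)) volume 0 1 :=
    hfg.continuousOn_mul hcont
  have hxf : IntervalIntegrable (fun x => x * f x) volume 0 1 :=
    hfi.continuousOn_mul continuous_id.continuousOn
  have hxg : IntervalIntegrable (fun x => x * g x) volume 0 1 :=
    hgi.continuousOn_mul continuous_id.continuousOn
  have key : ∫ x in (0:ℝ)..1, (x - c) * (f x - g x) ≤ 0 := by
    have : ∫ x in (0:ℝ)..1, (x - c) * (f x - g x) ≤ ∫ x in (0:ℝ)..1, (0:ℝ) := by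
      apply intervalIntegral.integral_mono_on h01 hm intervalIntegrable_const
      intro x hx
      rcases le_total x c with hxc | hcx
      · have := h1 x ⟨hx.1, hxc⟩
        exact mul_nonpos_of_nonpos_of_nonneg (by linarith) (by linarith)
      · have := h2 x ⟨hcx, hx.2⟩
        exact mul_nonpos_of_nonneg_of_nonpos (by linarith) (by linarith)
    simpa using this
  have hsplit : ∫ x in (0:ℝ)..1, (x - c) * (f x - g x)
      = (∫ x in (0:ℝ)..1, x * f x) - (∫ x in (0:ℝ)..1, x * g x)
        - c * ((∫ x in (0:ℝ)..1, f x) - ∫ x in (0:ℝ)..1, g x) := by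
    have : ∀ x : ℝ, (x - c) * (f x - g x)
        = x * f x - x * g x - c * (f x - g x) := by intro x; ring
    simp_rw [this]
    rw [intervalIntegral.integral_sub (hxf.sub hxg) (hfg.const_mul c),
      intervalIntegral.integral_sub hxf hxg,
      intervalIntegral.integral_const_mul,
      intervalIntegral.integral_sub hfi hgi]
  rw [hsplit, heq] at key
  linarith
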